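/- Let n ≥ 1, λ ∈ (0,1), and let X₁, X₂, Y be n×n real symmetric matrices with X₁ and X₂ negative definite. Assume that for all h, h₁, h₂ ∈ ℝⁿ with h = (1−λ)h₁ + λh₂ one has ⟨Yh, h⟩ ≥ (1−λ)⟨X₁h₁, h₁⟩ + λ⟨X₂h₂, h₂⟩. Then ((1−λ)X₁⁻¹ + λX₂⁻¹)⁻¹ ≤ Y in the Loewner order, i.e. Y − ((1−λ)X₁⁻¹ + λX₂⁻¹)⁻¹ is positive semidefinite. (Inequality (5.9), the Hessian inequality at a minimum of an infimal-convolution type expression.) -/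

import Mathlib

open Matrix

/-- **Inequality (5.9)**: if `X₁, X₂` are negative definite symmetric matrices and a
symmetric matrix `Y` satisfies
`⟨Yh,h⟩ ≥ (1−λ)⟨X₁h₁,h₁⟩ + λ⟨X₂h₂,h₂⟩` whenever `h = (1−λ)h₁ + λh₂`, then
`((1−λ)X₁⁻¹ + λX₂⁻¹)⁻¹ ≤ Y` in the Loewner order. -/
theorem hessian_harmonic_mean_le
    (n : ℕ) (hn : 1 ≤ n) (lam : ℝ) (hlam : lam ∈ Set.Ioo (0 : ℝ) 1)
    (X₁ X₂ Y : Matrix (Fin n) (Fin n) ℝ)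
    (hX₁s : X₁.IsSymm) (hX₂s : X₂.IsSymm) (hYs : Y.IsSymm)
    (hX₁ : (-X₁).PosDef) (hX₂ : (-X₂).PosDef)
    (hineq : ∀ h h₁ h₂ : Fin n → ℝ, h = (1 - lam) • h₁ + lam • h₂ →
      (1 - lam) * (X₁.mulVec h₁ ⬝ᵥ h₁) + lam * (X₂.mulVec h₂ ⬝ᵥ h₂) ≤
        Y.mulVec h ⬝ᵥ h) :
    (Y - ((1 - lam) • X₁⁻¹ + lam • X₂⁻¹)⁻¹).PosSemidef := by
  obtain ⟨hl0, hl1⟩ := hlam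
  have hl1' : 0 < 1 - lam := by linarith
  set M : Matrix (Fin n) (Fin n) ℝ := (1 - lam) • X₁⁻¹ + lam • X₂⁻¹ with hM
  -- invertibility of X₁, X₂
  have hu₁ : IsUnit X₁ := by simpa using hX₁.isUnit.neg
  have hu₂ : IsUnit X₂ := by simpa using hX₂.isUnit.neg
  have hd₁ : IsUnit X₁.det := (isUnit_iff_isUnit_det _).1 hu₁
  have hd₂ : IsUnit X₂.det := (isUnit_iff_isUnit_det _).1 hu₂
  have hinv₁ : (-X₁)⁻¹ = -X₁⁻¹ := by
    apply inv_eq_right_inv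
    rw [neg_mul_neg, mul_nonsing_inv _ hd₁]
  have hinv₂ : (-X₂)⁻¹ = -X₂⁻¹ := by
    apply inv_eq_right_inv
    rw [neg_mul_neg, mul_nonsing_inv _ hd₂]
  -- -M is positive definite
  have hMneg : (-M).PosDef := by
    have hA := hX₁.inv
    have hB := hX₂.inv
    rw [hinv₁] at hA
    rw [hinv₂] at hB
    refine posDef_iff_dotProduct_mulVec.2 ⟨?_, ?_⟩
    · have h1 : (-X₁⁻¹).IsHermitian := hA.1
      have h2 : (-X₂⁻¹).IsHermitian := hB.1
      show (-M)ᴴ = -M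
      rw [conjTranspose_eq_transpose_of_trivial]
      have e1 : X₁⁻¹ᵀ = X₁⁻¹ := by rw [transpose_nonsing_inv, hX₁s]
      have e2 : X₂⁻¹ᵀ = X₂⁻¹ := by rw [transpose_nonsing_inv, hX₂s]
      rw [hM, transpose_neg, transpose_add, transpose_smul, transpose_smul, e1, e2]
    · intro x hx
      have e : (-M) *ᵥ x = (1 - lam) • ((-X₁⁻¹) *ᵥ x) + lam • ((-X₂⁻¹) *ᵥ x) := by
        have : (-M) = (1 - lam) • (-X₁⁻¹) + lam • (-X₂⁻¹) := by rw [hM]; module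
        rw [this, add_mulVec, smul_mulVec, smul_mulVec]
      rw [e]
      simp only [dotProduct_add, dotProduct_smul, smul_eq_mul]
      have p1 := (posDef_iff_dotProduct_mulVec.1 hA).2 hx
      have p2 := (posDef_iff_dotProduct_mulVec.1 hB).2 hx
      simp only [star_trivial] at p1 p2 ⊢
      have : star x = x := by simp
      nlinarith [mul_pos hl1' p1, mul_pos hl0 p2]
  have hMu : IsUnit M := by
    have := hMneg.isUnit
    simpa using this.neg
  have hMd : IsUnit M.det := (isUnit_iff_isUnit_det _).1 hMu
  -- M is symmetric, so M⁻¹ is symmetric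
  have hMs : M.IsSymm := by
    have h1 : (X₁⁻¹).IsSymm := by
      rw [Matrix.IsSymm, transpose_nonsing_inv, hX₁s]
    have h2 : (X₂⁻¹).IsSymm := by
      rw [Matrix.IsSymm, transpose_nonsing_inv, hX₂s]
    rw [Matrix.IsSymm, hM, transpose_add, transpose_smul, transpose_smul, h1, h2]
  have hMinvs : (M⁻¹).IsSymm := by
    rw [Matrix.IsSymm, transpose_nonsing_inv, hMs]
  refine posSemidef_iff_dotProduct_mulVec.2 ⟨?_, ?_⟩
  · show (Y - M⁻¹).IsHermitian
    rw [Matrix.IsHermitian, conjTranspose_eq_transpose_of_trivial, transpose_sub, hYs, hMinvs]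
  · intro x
    simp only [RCLike.re_to_real, star_trivial]
    set u := M⁻¹ *ᵥ x with hu
    set h₁ := X₁⁻¹ *ᵥ u with hh₁
    set h₂ := X₂⁻¹ *ᵥ u with hh₂
    have hx_eq : x = (1 - lam) • h₁ + lam • h₂ := by
      have : M *ᵥ u = x := by
        rw [hu, mulVec_mulVec, mul_nonsing_inv _ hMd, one_mulVec]
      rw [← this, hM, add_mulVec, smul_mulVec, smul_mulVec]
    have e₁ : X₁ *ᵥ h₁ = u := by
      rw [hh₁, mulVec_mulVec, mul_nonsing_inv _ hd₁, one_mulVec]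
    have e₂ : X₂ *ᵥ h₂ = u := by
      rw [hh₂, mulVec_mulVec, mul_nonsing_inv _ hd₂, one_mulVec]
    have key := hineq x h₁ h₂ hx_eq
    rw [e₁, e₂] at key
    have lhs_eq : (1 - lam) * (u ⬝ᵥ h₁) + lam * (u ⬝ᵥ h₂) = M⁻¹ *ᵥ x ⬝ᵥ x := by
      have : u ⬝ᵥ x = u ⬝ᵥ ((1 - lam) • h₁ + lam • h₂) := by rw [← hx_eq]
      rw [dotProduct_add, dotProduct_smul, dotProduct_smul, smul_eq_mul, smul_eq_mul] at this
      rw [← this, hu, dotProduct_comm]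
    rw [lhs_eq] at key
    have : (Y - M⁻¹) *ᵥ x ⬝ᵥ x = Y *ᵥ x ⬝ᵥ x - M⁻¹ *ᵥ x ⬝ᵥ x := by
      rw [sub_mulVec, sub_dotProduct]
    rw [dotProduct_comm, this]
    linarith
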